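/- For every integer k with 1 ≤ k ≤ 6 and every σ > 0 there exists θ₀ ∈ (π/2, π) such that for every θ ∈ (π/2, θ₀] there exists κ₀ > 0 with: for every κ ≥ κ₀ there is a constant c > 0 such that for all τ ∈ (0,1] with κ·τ·sin θ ≤ π and all z ∈ Γ^τ_{θ,κ}, one has |δ_τ(e^{−(σ+z)τ}) − (σ+z)| ≤ c·τ^k·|σ+z|^{k+1}, and moreover |δ_τ(e^{−(σ+z)τ}) − (σ+z)| ≤ c·τ^k·|z|^{k+1}. -/

import Mathlib

open Real

/-- Generating polynomial of the k-step BDF method: δ(ξ) = ∑_{j=1}^{k} (1/j)(1−ξ)^j. -/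
noncomputable def bdfDelta (k : ℕ) (ξ : ℂ) : ℂ :=
  ∑ j ∈ Finset.Icc 1 k, (1 / (j : ℂ)) * (1 - ξ) ^ j

/-- Truncated sectorial contour Γ^τ_{θ,κ}. -/
noncomputable def contourTrunc (θ κ τ : ℝ) : Set ℂ :=
  {z : ℂ | ‖z‖ = κ ∧ |z.arg| ≤ θ} ∪
    {z : ℂ | ∃ r : ℝ, κ ≤ r ∧ r ≤ π / (τ * Real.sin θ) ∧
      (z = (r : ℂ) * Complex.exp (θ * Complex.I) ∨
        z = (r : ℂ) * Complex.exp (-θ * Complex.I))}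

/-- Core estimate: |δ(e^{-w}) - w| ≤ C |w|^{k+1} on any disk |w| ≤ R. -/
lemma bdf_key (k : ℕ) (hk : 1 ≤ k) (R : ℝ) (hR : 1 ≤ R) :
    ∃ C > (0:ℝ), ∀ w : ℂ, ‖w‖ ≤ R →
      ‖bdfDelta k (Complex.exp (-w)) - w‖ ≤ C * ‖w‖ ^ (k+1) := by
  refine ⟨2^(k+2) + (k * (1 + Real.exp R)^k + R) * 4^(k+1), by positivity, ?_⟩
  intro w hw
  set x : ℂ := 1 - Complex.exp (-w) with hxdef
  have hxw : ‖x‖ = ‖Complex.exp (-w) - 1‖ := by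
    rw [hxdef, ← norm_neg, neg_sub]
  rcases le_or_gt (‖w‖) (1/4) with hsmall | hbig
  · -- small case : use the log series
    have hxle : ‖x‖ ≤ 2 * ‖w‖ := by
      rw [hxw]
      have := Complex.norm_exp_sub_one_le (x := -w) (by rw [norm_neg]; linarith)
      simpa [norm_neg] using this
    have hxhalf : ‖x‖ ≤ 1/2 := by linarith
    have hxlt : ‖x‖ < 1 := by
      linarith
    have hsum : HasSum (fun n : ℕ ↦ x ^ n / n) w := by
      have h1 : (1 : ℂ) - x = Complex.exp (-w) := by rw [hxdef]; ring
      have him : -π < (-w).im ∧ (-w).im ≤ π := by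
        have h := Complex.abs_im_le_norm (-w)
        rw [norm_neg, abs_le] at h
        have hpi : (1:ℝ)/4 < π := by linarith [Real.pi_gt_three]
        exact ⟨by linarith [h.1], by linarith [h.2]⟩
      have hlog : Complex.log (1 - x) = -w := by
        rw [h1, Complex.log_exp him.1 him.2]
      have := Complex.hasSum_taylorSeries_neg_log hxlt
      rwa [hlog, neg_neg] at this
    -- bdfDelta equals the partial sum over range (k+1)
    have hpart : bdfDelta k (Complex.exp (-w)) = ∑ j ∈ Finset.range (k+1), x ^ j / j := by
      rw [bdfDelta]
      rw [show Finset.range (k+1) = insert 0 (Finset.Icc 1 k) from by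
        ext i; simp [Finset.mem_range, Finset.mem_Icc]; omega]
      rw [Finset.sum_insert (by simp)]
      simp only [Nat.cast_zero, pow_zero, div_zero, zero_add]
      exact Finset.sum_congr rfl fun j _ => by rw [hxdef]; ring
    have htail := Summable.sum_add_tsum_nat_add (f := fun n : ℕ ↦ x ^ n / n) (k+1) hsum.summable
    rw [hsum.tsum_eq] at htail
    have heq : bdfDelta k (Complex.exp (-w)) - w = -∑' i : ℕ, x ^ (i + (k+1)) / (i + (k+1) : ℕ) := by
      rw [hpart]; rw [← htail]; ring
    rw [heq, norm_neg]
    have hgeo : HasSum (fun i : ℕ ↦ ‖x‖ ^ (k+1) * ‖x‖ ^ i)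
        (‖x‖ ^ (k+1) * (1 - ‖x‖)⁻¹) :=
      (hasSum_geometric_of_lt_one (norm_nonneg x) (by linarith)).mul_left _
    have hbound : ∀ i : ℕ, ‖x ^ (i + (k+1)) / ((i + (k+1) : ℕ) : ℂ)‖ ≤
        ‖x‖ ^ (k+1) * ‖x‖ ^ i := by
      intro i
      rw [norm_div, norm_pow]
      have hn1 : (1:ℝ) ≤ ‖((i + (k+1) : ℕ) : ℂ)‖ := by
        rw [Complex.norm_natCast]
        exact_mod_cast Nat.one_le_iff_ne_zero.2 (by omega)
      calc ‖x‖ ^ (i + (k+1)) / ‖((i + (k+1) : ℕ) : ℂ)‖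
          ≤ ‖x‖ ^ (i + (k+1)) := div_le_self (pow_nonneg (norm_nonneg x) _) hn1
        _ = ‖x‖ ^ (k+1) * ‖x‖ ^ i := by
            rw [pow_add]; ring
    have := tsum_of_norm_bounded hgeo hbound
    calc ‖∑' i : ℕ, x ^ (i + (k+1)) / ((i + (k+1) : ℕ) : ℂ)‖
        ≤ ‖x‖ ^ (k+1) * (1 - ‖x‖)⁻¹ := this
      _ ≤ (2 * ‖w‖) ^ (k+1) * 2 := by
          apply mul_le_mul (pow_le_pow_left₀ (norm_nonneg x) hxle _)
          · rw [inv_le_comm₀ (by linarith) (by norm_num)]; linarith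
          · rw [inv_nonneg]; linarith
          · positivity
      _ = 2^(k+2) * ‖w‖ ^ (k+1) := by rw [mul_pow]; ring
      _ ≤ _ := by
          have h1 : (0:ℝ) ≤ (k * (1 + Real.exp R)^k + R) * 4^(k+1) := by positivity
          have h2 : (0:ℝ) ≤ ‖w‖ ^ (k+1) := by positivity
          nlinarith
  · -- large case : crude bound
    have hxR : ‖x‖ ≤ 1 + Real.exp R := by
      calc ‖x‖ ≤ ‖(1:ℂ)‖ + ‖Complex.exp (-w)‖ := by
            rw [hxdef]; exact norm_sub_le _ _
        _ ≤ 1 + Real.exp R := by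
            rw [norm_one, Complex.norm_exp]
            have : (-w).re ≤ R := by
              have := Complex.abs_re_le_norm (-w)
              rw [norm_neg] at this
              rw [abs_le] at this; linarith [this.2]
            exact add_le_add_right (Real.exp_le_exp.2 this) 1
    have hM : ‖bdfDelta k (Complex.exp (-w)) - w‖ ≤ k * (1 + Real.exp R)^k + R := by
      calc ‖bdfDelta k (Complex.exp (-w)) - w‖
          ≤ ‖bdfDelta k (Complex.exp (-w))‖ + ‖w‖ :=
            norm_sub_le _ _
        _ ≤ k * (1 + Real.exp R)^k + R := by
            apply add_le_add _ hw
            rw [bdfDelta]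
            calc ‖∑ j ∈ Finset.Icc 1 k, (1 / (j : ℂ)) * (1 - Complex.exp (-w)) ^ j‖
                ≤ ∑ j ∈ Finset.Icc 1 k, ‖(1 / (j : ℂ)) * (1 - Complex.exp (-w)) ^ j‖ :=
                  norm_sum_le _ _
              _ ≤ ∑ j ∈ Finset.Icc 1 k, (1 + Real.exp R)^k := by
                  apply Finset.sum_le_sum
                  intro j hj
                  rw [Finset.mem_Icc] at hj
                  rw [norm_mul, norm_pow]
                  have hj1 : (1:ℝ) ≤ (j:ℝ) := by exact_mod_cast hj.1
                  have h1e : (1:ℝ) ≤ 1 + Real.exp R := by linarith [Real.exp_pos R]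
                  calc ‖1 / (j : ℂ)‖ * ‖1 - Complex.exp (-w)‖ ^ j
                      ≤ 1 * (1 + Real.exp R)^j := by
                        apply mul_le_mul
                        · rw [norm_div, norm_one, Complex.norm_natCast]
                          rw [div_le_one (by linarith)]
                          exact hj1
                        · exact pow_le_pow_left₀ (norm_nonneg _) (hxdef ▸ hxR) j
                        · positivity
                        · norm_num
                    _ ≤ 1 * (1 + Real.exp R)^k := by
                        apply mul_le_mul_of_nonneg_left _ (by norm_num)
                        exact pow_le_pow_right₀ h1e hj.2
                    _ = (1 + Real.exp R)^k := by ring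
              _ = k * (1 + Real.exp R)^k := by
                  rw [Finset.sum_const, Nat.card_Icc]; simp [nsmul_eq_mul]
    have h4w : (1:ℝ) ≤ 4 * ‖w‖ := by linarith
    have hpow : (1:ℝ) ≤ 4^(k+1) * ‖w‖ ^ (k+1) := by
      calc (1:ℝ) = 1^(k+1) := (one_pow _).symm
        _ ≤ (4 * ‖w‖)^(k+1) := pow_le_pow_left₀ (by norm_num) h4w _
        _ = 4^(k+1) * ‖w‖ ^ (k+1) := mul_pow _ _ _
    have hMnn : (0:ℝ) ≤ k * (1 + Real.exp R)^k + R := by positivity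
    calc ‖bdfDelta k (Complex.exp (-w)) - w‖
        ≤ k * (1 + Real.exp R)^k + R := hM
      _ = (k * (1 + Real.exp R)^k + R) * 1 := (mul_one _).symm
      _ ≤ (k * (1 + Real.exp R)^k + R) * (4^(k+1) * ‖w‖ ^ (k+1)) :=
          mul_le_mul_of_nonneg_left hpow hMnn
      _ ≤ _ := by
          have h2 : (0:ℝ) ≤ ‖w‖ ^ (k+1) := by positivity
          nlinarith [pow_pos (show (0:ℝ) < 2 from by norm_num) (k+2)]

/-- For 1 ≤ k ≤ 6 and σ > 0: |δ_τ(e^{−(σ+z)τ}) − (σ+z)| ≤ c·τ^k·|σ+z|^{k+1}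
and ≤ c·τ^k·|z|^{k+1} on Γ^τ_{θ,κ}, for κ large enough. -/
theorem bdfDelta_tau_shift_error (k : ℕ) (hk1 : 1 ≤ k) (hk6 : k ≤ 6)
    (σ : ℝ) (hσ : 0 < σ) :
    ∃ θ₀ ∈ Set.Ioo (π / 2) π, ∀ θ ∈ Set.Ioc (π / 2) θ₀,
      ∃ κ₀ > (0 : ℝ), ∀ κ : ℝ, κ₀ ≤ κ →
        ∃ c > (0 : ℝ), ∀ τ ∈ Set.Ioc (0 : ℝ) 1, κ * τ * Real.sin θ ≤ π →
          ∀ z ∈ contourTrunc θ κ τ,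
            ‖bdfDelta k (Complex.exp (-((σ : ℂ) + z) * (τ : ℂ))) / (τ : ℂ)
                - ((σ : ℂ) + z)‖
              ≤ c * τ ^ k * ‖(σ : ℂ) + z‖ ^ (k + 1) ∧
            ‖bdfDelta k (Complex.exp (-((σ : ℂ) + z) * (τ : ℂ))) / (τ : ℂ)
                - ((σ : ℂ) + z)‖
              ≤ c * τ ^ k * ‖z‖ ^ (k + 1) := by
  have hpi := Real.pi_gt_three
  refine ⟨3 * π / 4, ⟨by linarith, by linarith⟩, ?_⟩
  intro θ hθ
  have hθ1 : π / 2 < θ := hθ.1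
  have hθ2 : θ ≤ 3 * π / 4 := hθ.2
  have hθpos : 0 < θ := by linarith
  have hθltpi : θ < π := by linarith
  have hsinpos : 0 < Real.sin θ := Real.sin_pos_of_pos_of_lt_pi hθpos hθltpi
  refine ⟨2 * σ, by linarith, ?_⟩
  intro κ hκ
  set R : ℝ := σ + π / Real.sin θ with hRdef
  have hRσ : 0 < π / Real.sin θ := by positivity
  have hR1 : 1 ≤ R := by
    have : 1 ≤ π / Real.sin θ := by
      rw [le_div_iff₀ hsinpos]
      have := Real.sin_le_one θ
      linarith
    rw [hRdef]; linarith
  obtain ⟨C, hCpos, hC⟩ := bdf_key k hk1 R hR1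
  refine ⟨C * (3/2)^(k+1), by positivity, ?_⟩
  intro τ hτ hκτ z hz
  have hτ0 : 0 < τ := hτ.1
  have hτ1 : τ ≤ 1 := hτ.2
  -- basic facts about z on the contour
  have hzfacts : 2 * σ ≤ ‖z‖ ∧ τ * ‖z‖ ≤ π / Real.sin θ := by
    rcases hz with ⟨habs, -⟩ | ⟨r, hr1, hr2, hform⟩
    · constructor
      · rw [habs]; linarith
      · rw [habs, le_div_iff₀ hsinpos]
        nlinarith [hκτ]
    · have hrpos : 0 < r := lt_of_lt_of_le (by linarith) hr1
      have habsz : ‖z‖ = r := by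
        rcases hform with h | h <;>
        · rw [h, norm_mul, Complex.norm_real, Real.norm_eq_abs, abs_of_pos hrpos,
            Complex.norm_exp]
          simp [Complex.mul_re]
      constructor
      · rw [habsz]; linarith
      · rw [habsz, le_div_iff₀ hsinpos]
        rw [le_div_iff₀ (mul_pos hτ0 hsinpos)] at hr2
        nlinarith [hr2]
  obtain ⟨hz2σ, hzτ⟩ := hzfacts
  set w : ℂ := ((σ : ℂ) + z) * (τ : ℂ) with hwdef
  have habsw : ‖w‖ = ‖(σ:ℂ) + z‖ * τ := by
    rw [hwdef, norm_mul, Complex.norm_real, Real.norm_eq_abs, abs_of_pos hτ0]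
  have hwR : ‖w‖ ≤ R := by
    rw [habsw]
    calc ‖(σ:ℂ) + z‖ * τ ≤ (σ + ‖z‖) * τ := by
          apply mul_le_mul_of_nonneg_right _ hτ0.le
          calc ‖(σ:ℂ) + z‖ ≤ ‖(σ:ℂ)‖ + ‖z‖ :=
                norm_add_le _ _
            _ = σ + ‖z‖ := by rw [Complex.norm_real, Real.norm_eq_abs, abs_of_pos hσ]
      _ = σ * τ + τ * ‖z‖ := by ring
      _ ≤ σ * 1 + π / Real.sin θ := by
          apply add_le_add _ hzτ
          exact mul_le_mul_of_nonneg_left hτ1 hσ.le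
      _ = R := by rw [hRdef]; ring
  have hexp : Complex.exp (-((σ : ℂ) + z) * (τ : ℂ)) = Complex.exp (-w) := by
    rw [hwdef]; ring_nf
  have hmain : ‖bdfDelta k (Complex.exp (-((σ : ℂ) + z) * (τ : ℂ))) / (τ : ℂ)
      - ((σ : ℂ) + z)‖ ≤ C * τ ^ k * ‖(σ:ℂ) + z‖ ^ (k+1) := by
    have hτne : (τ : ℂ) ≠ 0 := by exact_mod_cast hτ0.ne'
    have heq : bdfDelta k (Complex.exp (-((σ : ℂ) + z) * (τ : ℂ))) / (τ : ℂ)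
        - ((σ : ℂ) + z) = (bdfDelta k (Complex.exp (-w)) - w) / (τ : ℂ) := by
      rw [hexp, hwdef]
      field_simp
    rw [heq, norm_div, Complex.norm_real, Real.norm_eq_abs, abs_of_pos hτ0]
    rw [div_le_iff₀ hτ0]
    calc ‖bdfDelta k (Complex.exp (-w)) - w‖
        ≤ C * ‖w‖ ^ (k+1) := hC w hwR
      _ = C * τ ^ k * ‖(σ:ℂ) + z‖ ^ (k+1) * τ := by
          rw [habsw, mul_pow]; ring
  constructor
  · refine hmain.trans ?_
    have h32 : (1:ℝ) ≤ (3/2:ℝ)^(k+1) := one_le_pow₀ (by norm_num : (1:ℝ) ≤ 3/2)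
    have h1 : (0:ℝ) ≤ C * τ ^ k * ‖(σ:ℂ) + z‖ ^ (k+1) := by positivity
    nlinarith [pow_pos hτ0 k, pow_nonneg (norm_nonneg ((σ:ℂ)+z)) (k+1),
      mul_pos hCpos (pow_pos hτ0 k)]
  · refine hmain.trans ?_
    have hσz : ‖(σ:ℂ) + z‖ ≤ 3/2 * ‖z‖ := by
      calc ‖(σ:ℂ) + z‖ ≤ ‖(σ:ℂ)‖ + ‖z‖ :=
            norm_add_le _ _
        _ = σ + ‖z‖ := by rw [Complex.norm_real, Real.norm_eq_abs, abs_of_pos hσ]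
        _ ≤ 3/2 * ‖z‖ := by linarith
    calc C * τ ^ k * ‖(σ:ℂ) + z‖ ^ (k+1)
        ≤ C * τ ^ k * (3/2 * ‖z‖) ^ (k+1) := by
          apply mul_le_mul_of_nonneg_left _ (by positivity)
          exact pow_le_pow_left₀ (norm_nonneg _) hσz _
      _ = C * (3/2)^(k+1) * τ ^ k * ‖z‖ ^ (k+1) := by
          rw [mul_pow]; ring
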